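/- For every polynomial g ∈ R[t] over a commutative ring R, the polarized Dedekind–Mertens number μ̃_R(g) is at most μ_R(c(g)), the minimal number of generators of the content ideal c(g). In particular, for any f_1, …, f_k ∈ R[t] with k = μ_R(c(g)), one has ∑_{i=1}^k c(f_i g)·c(f_1)⋯ĉ(f_i)⋯c(f_k) = c(f_1)⋯c(f_k)·c(g). -/

import Mathlib

open Polynomial

/-- The content ideal of a polynomial: the ideal generated by its coefficients. -/
noncomputable def cont {R : Type*} [CommRing R] (p : R[X]) : Ideal R :=
  Ideal.span (Set.range p.coeff)

/-- The minimal number of generators of an ideal. -/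
noncomputable def mug {R : Type*} [CommRing R] (I : Ideal R) : ℕ :=
  sInf {n | ∃ x : Fin n → R, Ideal.span (Set.range x) = I}

/-- The Dedekind--Mertens number of a polynomial. -/
noncomputable def dmNumber (R : Type*) [CommRing R] (g : R[X]) : ℕ :=
  sInf {k | 0 < k ∧ ∀ f : R[X], cont (f * g) * cont f ^ (k - 1) = cont f ^ k * cont g}

/-- The polarized Dedekind--Mertens number of a polynomial. -/
noncomputable def polDmNumber (R : Type*) [CommRing R] (g : R[X]) : ℕ :=
  sInf {k | 0 < k ∧ ∀ f : Fin k → R[X],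
    (∑ i, cont (f i * g) * ∏ j ∈ Finset.univ.erase i, cont (f j)) =
      (∏ i, cont (f i)) * cont g}

/-- `x` is in the integral closure of the ideal `I`. -/
def memIntCl {R : Type*} [CommRing R] (I : Ideal R) (x : R) : Prop :=
  ∃ k : ℕ, 0 < k ∧ ∃ a : ℕ → R, (∀ i, 1 ≤ i → i ≤ k → a i ∈ I ^ i) ∧
    x ^ k + ∑ i ∈ Finset.Icc 1 k, a i * x ^ (k - i) = 0

namespace PolDM

variable {R : Type*} [CommRing R]

theorem coeff_mem_cont (p : R[X]) (n : ℕ) : p.coeff n ∈ cont p :=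
  Ideal.subset_span ⟨n, rfl⟩

theorem cont_le_iff {p : R[X]} {I : Ideal R} : cont p ≤ I ↔ ∀ n, p.coeff n ∈ I := by
  rw [cont, Ideal.span_le, Set.range_subset_iff]; rfl

theorem cont_fg (p : R[X]) : (cont p).FG := by
  apply Submodule.fg_span
  apply Set.Finite.subset (Set.Finite.insert (0 : R) p.coeffs.finite_toSet)
  rintro _ ⟨n, rfl⟩
  by_cases h : p.coeff n = 0
  · exact h ▸ Set.mem_insert _ _
  · exact Set.mem_insert_of_mem _ (p.coeff_mem_coeffs h)

theorem cont_mul_le (p q : R[X]) : cont (p * q) ≤ cont p * cont q := by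
  rw [cont_le_iff]
  intro n
  rw [coeff_mul]
  exact Submodule.sum_mem _ fun x _ =>
    Ideal.mul_mem_mul (coeff_mem_cont p x.1) (coeff_mem_cont q x.2)

theorem cont_map {A : Type*} [CommRing A] (φ : R →+* A) (p : R[X]) :
    cont (p.map φ) = (cont p).map φ := by
  rw [cont, cont, Ideal.map_span, ← Set.range_comp]
  congr 1
  ext n
  simp [coeff_map]

theorem cont_eq_bot_iff {p : R[X]} : cont p = ⊥ ↔ p = 0 := by
  constructor
  · intro h
    ext n
    have := coeff_mem_cont p n
    rw [h] at this
    simpa using this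
  · rintro rfl
    rw [eq_bot_iff, cont_le_iff]
    simp

theorem map_ideal_sum {A : Type*} [CommRing A] (φ : R →+* A) {ι : Type*} (s : Finset ι)
    (J : ι → Ideal R) : Ideal.map φ (∑ i ∈ s, J i) = ∑ i ∈ s, Ideal.map φ (J i) := by
  classical
  induction s using Finset.cons_induction with
  | empty => simp [Ideal.map_bot]
  | cons i s hi ih =>
    rw [Finset.sum_cons, Finset.sum_cons, Submodule.add_eq_sup, Submodule.add_eq_sup,
      Ideal.map_sup, ih]

theorem map_ideal_prod {A : Type*} [CommRing A] (φ : R →+* A) {ι : Type*} (s : Finset ι)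
    (J : ι → Ideal R) : Ideal.map φ (∏ i ∈ s, J i) = ∏ i ∈ s, Ideal.map φ (J i) := by
  classical
  induction s using Finset.cons_induction with
  | empty => simp [Ideal.one_eq_top, Ideal.map_top]
  | cons i s hi ih =>
    rw [Finset.prod_cons, Finset.prod_cons, Ideal.map_mul, ih]

/-- The product of content ideals is spanned by products of coefficients. -/
theorem prod_cont_eq_span {k : ℕ} (f : Fin k → R[X]) (s : Finset (Fin k)) :
    (∏ i ∈ s, cont (f i)) =
      Ideal.span {z | ∃ j : Fin k → ℕ, z = ∏ i ∈ s, (f i).coeff (j i)} := by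
  classical
  induction s using Finset.cons_induction with
  | empty =>
    have : {z : R | ∃ j : Fin k → ℕ, z = ∏ i ∈ (∅ : Finset (Fin k)), (f i).coeff (j i)}
        = {1} := by
      ext z
      simp only [Finset.prod_empty, Set.mem_setOf_eq, Set.mem_singleton_iff]
      constructor
      · rintro ⟨j, h⟩; exact h
      · intro h; exact ⟨fun _ => 0, h⟩
    rw [Finset.prod_empty, this, Ideal.span_singleton_one, Ideal.one_eq_top]
  | cons i₀ s hi ih =>
    rw [Finset.prod_cons, ih, cont, Ideal.span_mul_span']
    congr 1
    ext z
    constructor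
    · rintro ⟨x, ⟨n, rfl⟩, y, ⟨j, rfl⟩, rfl⟩
      refine ⟨Function.update j i₀ n, ?_⟩
      rw [Finset.prod_cons, Function.update_self]
      congr 1
      refine Finset.prod_congr rfl fun i hi' => ?_
      have : i ≠ i₀ := fun h => hi (h ▸ hi')
      rw [Function.update_of_ne this]
    · rintro ⟨j, rfl⟩
      rw [Finset.prod_cons]
      exact Set.mul_mem_mul ⟨j i₀, rfl⟩ ⟨j, rfl⟩

/-- Rank for the well-founded multi-index induction. Base `B = N*k + k + 2`. -/
def rank (N k : ℕ) (l : Fin k) (j : Fin k → ℕ) : ℕ :=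
  (∑ i ∈ Finset.Iic l, (N - j i) * (N * k + k + 2) ^ (k - 1 - i.val)) + l.val

theorem rank_lt_left {N k : ℕ} {l l' : Fin k} {j j' : Fin k → ℕ}
    (h : l' < l) (hj : ∀ i, i ≤ l' → j' i = j i) : rank N k l' j' < rank N k l j := by
  unfold rank
  have h1 : ∑ i ∈ Finset.Iic l', (N - j' i) * (N * k + k + 2) ^ (k - 1 - i.val)
      = ∑ i ∈ Finset.Iic l', (N - j i) * (N * k + k + 2) ^ (k - 1 - i.val) :=
    Finset.sum_congr rfl fun i hi => by rw [hj i (Finset.mem_Iic.1 hi)]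
  have h2 : ∑ i ∈ Finset.Iic l', (N - j i) * (N * k + k + 2) ^ (k - 1 - i.val)
      ≤ ∑ i ∈ Finset.Iic l, (N - j i) * (N * k + k + 2) ^ (k - 1 - i.val) :=
    Finset.sum_le_sum_of_subset (Finset.Iic_subset_Iic.2 h.le)
  have h3 : l'.val < l.val := h
  omega

theorem rank_lt_update {N k : ℕ} {l l' : Fin k} {j : Fin k → ℕ} {s : ℕ}
    (h : l ≤ l') (hs : j l < s) (hsN : s ≤ N) :
    rank N k l' (Function.update j l s) < rank N k l j := by
  set B := N * k + k + 2 with hB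
  have hB1 : 1 ≤ B := by omega
  have herase : ∀ (jj : Fin k → ℕ), ∑ i ∈ Finset.Iic l, (N - jj i) * B ^ (k - 1 - i.val)
      = (∑ i ∈ (Finset.Iic l).erase l, (N - jj i) * B ^ (k - 1 - i.val))
        + (N - jj l) * B ^ (k - 1 - l.val) := by
    intro jj
    rw [Finset.sum_erase_add _ _ (Finset.mem_Iic.2 le_rfl)]
  have hsame : ∑ i ∈ (Finset.Iic l).erase l,
        (N - Function.update j l s i) * B ^ (k - 1 - i.val)
      = ∑ i ∈ (Finset.Iic l).erase l, (N - j i) * B ^ (k - 1 - i.val) :=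
    Finset.sum_congr rfl fun i hi => by
      rw [Function.update_of_ne (Finset.ne_of_mem_erase hi)]
  rcases eq_or_lt_of_le h with rfl | hlt
  · unfold rank
    simp only [← hB]
    rw [herase, herase, hsame, Function.update_self]
    have hP : 0 < B ^ (k - 1 - l.val) := Nat.pow_pos (by omega)
    have : (N - s) * B ^ (k - 1 - l.val) < (N - j l) * B ^ (k - 1 - l.val) :=
      (Nat.mul_lt_mul_right hP).2 (by omega)
    omega
  · -- l < l'
    have hvl : l.val < l'.val := hlt
    have hl'k : l'.val < k := l'.isLt
    set e := k - 2 - l.val with he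
    have hunion : Finset.Iic l' = Finset.Iic l ∪ Finset.Ioc l l' := by
      ext i
      simp only [Finset.mem_union, Finset.mem_Iic, Finset.mem_Ioc, Fin.le_def, Fin.lt_def]
      omega
    have hdisj : Disjoint (Finset.Iic l) (Finset.Ioc l l') := by
      simp only [Finset.disjoint_left, Finset.mem_Iic, Finset.mem_Ioc]
      intro i h1 h2
      exact absurd h2.1 (not_lt.2 h1)
    have hX : 1 ≤ B ^ e := Nat.one_le_pow _ _ (by omega)
    have hpow : B ^ (k - 1 - l.val) = B * B ^ e := by
      rw [← pow_succ']
      congr 1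
      omega
    have hmid : ∑ i ∈ Finset.Ioc l l', (N - Function.update j l s i) * B ^ (k - 1 - i.val)
        ≤ k * (N * B ^ e) := by
      calc ∑ i ∈ Finset.Ioc l l', (N - Function.update j l s i) * B ^ (k - 1 - i.val)
          ≤ ∑ _i ∈ Finset.Ioc l l', N * B ^ e := by
            refine Finset.sum_le_sum fun i hi => Nat.mul_le_mul (Nat.sub_le _ _) ?_
            refine Nat.pow_le_pow_right hB1 ?_
            have h2 := (Finset.mem_Ioc.1 hi).1
            have h3 : l.val < i.val := h2
            omega
        _ = (Finset.Ioc l l').card * (N * B ^ e) := by rw [Finset.sum_const, smul_eq_mul]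
        _ ≤ k * (N * B ^ e) := by
            refine Nat.mul_le_mul_right _ ?_
            calc (Finset.Ioc l l').card ≤ (Finset.univ : Finset (Fin k)).card :=
                  Finset.card_le_univ _
              _ = k := by simp
    -- key numeric inequality
    have h6 : k * N * B ^ e + l'.val < B * B ^ e := by
      have h7 : k ≤ k * B ^ e := Nat.le_mul_of_pos_right k (by omega)
      have h8 : B * B ^ e = N * k * B ^ e + k * B ^ e + 2 * B ^ e := by rw [hB]; ring
      have h9 : l'.val < k := l'.isLt
      nlinarith [hX]
    have hD : (N - s) + 1 ≤ N - j l := by omega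
    have hkey : (N - s) * B ^ (k - 1 - l.val) + k * (N * B ^ e) + l'.val
        < (N - j l) * B ^ (k - 1 - l.val) + l.val := by
      rw [hpow]
      have h9 : ((N - s) + 1) * (B * B ^ e) ≤ (N - j l) * (B * B ^ e) :=
        Nat.mul_le_mul_right _ hD
      nlinarith [h6]
    unfold rank
    simp only [← hB]
    rw [hunion, Finset.sum_union hdisj, herase, herase, hsame, Function.update_self]
    have hms := hmid
    omega

theorem main_local [IsLocalRing R] (g : R[X]) {k t : ℕ} (htk : t ≤ k)
    (p : ℕ → ℕ) (a : ℕ → R)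
    (hdec : ∀ l l', l < l' → l' < t → p l' < p l)
    (ha : ∀ l, l < t → a l = g.coeff (p l))
    (H1 : ∀ l, l < t → ∀ u, p l < u →
      g.coeff u ∈ Ideal.span (a '' Set.Iio l) + IsLocalRing.maximalIdeal R * cont g)
    (H2 : ∀ u, g.coeff u ∈ Ideal.span (a '' Set.Iio t) + IsLocalRing.maximalIdeal R * cont g)
    (f : Fin k → R[X]) :
    (∏ i, cont (f i)) * cont g ≤
      (∑ i, cont (f i * g) * ∏ j ∈ Finset.univ.erase i, cont (f j))
        + IsLocalRing.maximalIdeal R * ((∏ i, cont (f i)) * cont g) := by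
  classical
  set M := IsLocalRing.maximalIdeal R with hM
  set C := cont g with hC
  set P := ∏ i, cont (f i) with hP
  set S := ∑ i, cont (f i * g) * ∏ j ∈ Finset.univ.erase i, cont (f j) with hS
  set G := S + M * (P * C) with hG
  set N := Finset.univ.sup (fun i : Fin k => (f i).natDegree) with hN
  have hS_le_G : S ≤ G := self_le_add_right S (M * (P * C))
  have hMPC_le_G : M * (P * C) ≤ G := self_le_add_left (M * (P * C)) S
  have hprodmem : ∀ j : Fin k → ℕ, (∏ i, (f i).coeff (j i)) ∈ P := fun j =>
    Ideal.prod_mem_prod fun i _ => coeff_mem_cont _ _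
  have hGP : ∀ z ε : R, z ∈ P → ε ∈ M * C → z * ε ∈ G := by
    intro z ε hz hε
    have h1 : z * ε ∈ P * (M * C) := Ideal.mul_mem_mul hz hε
    have heq : P * (M * C) = M * (P * C) := by ring
    exact hMPC_le_G (heq ▸ h1)
  have himg : ∀ lam : ℕ, (a '' Set.Iio lam : Set R) = Set.range (fun i : Fin lam => a i.val) := by
    intro lam
    ext z
    constructor
    · rintro ⟨m, hm, rfl⟩; exact ⟨⟨m, hm⟩, rfl⟩
    · rintro ⟨i, rfl⟩; exact ⟨i.val, i.isLt, rfl⟩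
  -- the key induction
  have key : ∀ (r : ℕ) (l : Fin k), l.val < t → ∀ j : Fin k → ℕ,
      rank N k l j ≤ r → a l.val * ∏ i, (f i).coeff (j i) ∈ G := by
    intro r
    induction r using Nat.strong_induction_on with
    | _ r IH =>
    intro l hlt j hrank
    by_cases hz0 : ∃ i, (f i).coeff (j i) = 0
    · obtain ⟨i, h0⟩ := hz0
      rw [Finset.prod_eq_zero (Finset.mem_univ i) h0, mul_zero]
      exact zero_mem _
    push_neg at hz0
    have hjN : ∀ i, j i ≤ N := fun i => by
      rw [hN]
      exact le_trans (le_natDegree_of_ne_zero (hz0 i)) (Finset.le_sup (f := fun i => (f i).natDegree) (Finset.mem_univ i))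
    set n := p l.val + j l with hn
    set b := ∏ i ∈ Finset.univ.erase l, (f i).coeff (j i) with hb
    have hbmem : b ∈ ∏ i ∈ Finset.univ.erase l, cont (f i) :=
      Ideal.prod_mem_prod fun i _ => coeff_mem_cont _ _
    have hpair : ((j l : ℕ), p l.val) ∈ Finset.HasAntidiagonal.antidiagonal n := by
      rw [Finset.HasAntidiagonal.mem_antidiagonal]
      omega
    have hsplitsum : (f l * g).coeff n
        = (f l).coeff (j l) * g.coeff (p l.val)
          + ∑ x ∈ (Finset.HasAntidiagonal.antidiagonal n).erase ((j l : ℕ), p l.val),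
              (f l).coeff x.1 * g.coeff x.2 := by
      rw [coeff_mul, ← Finset.add_sum_erase _ _ hpair]
    have hgoal_eq : a l.val * ∏ i, (f i).coeff (j i)
        = (f l * g).coeff n * b
          - ∑ x ∈ (Finset.HasAntidiagonal.antidiagonal n).erase ((j l : ℕ), p l.val),
              (f l).coeff x.1 * g.coeff x.2 * b := by
      rw [← Finset.mul_prod_erase Finset.univ _ (Finset.mem_univ l), ← hb, ha l.val hlt,
        hsplitsum, add_mul, Finset.sum_mul]
      ring
    rw [hgoal_eq]
    refine sub_mem ?_ (sum_mem fun x hx => ?_)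
    · refine hS_le_G ?_
      have hterm : (f l * g).coeff n * b
          ∈ cont (f l * g) * ∏ i ∈ Finset.univ.erase l, cont (f i) :=
        Ideal.mul_mem_mul (coeff_mem_cont _ _) hbmem
      have hle : cont (f l * g) * ∏ i ∈ Finset.univ.erase l, cont (f i) ≤ S := by
        have hsum : (∑ i ∈ Finset.univ.erase l, cont (f i * g) * ∏ jj ∈ Finset.univ.erase i, cont (f jj))
            + cont (f l * g) * ∏ jj ∈ Finset.univ.erase l, cont (f jj) = S := by
          rw [hS]
          exact Finset.sum_erase_add _ _ (Finset.mem_univ l)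
        rw [← hsum]
        exact self_le_add_left _ _
      exact hle hterm
    · obtain ⟨hxne, hxmem⟩ := Finset.mem_erase.1 hx
      have hxsum : x.1 + x.2 = n := Finset.HasAntidiagonal.mem_antidiagonal.1 hxmem
      by_cases hfs : (f l).coeff x.1 = 0
      · rw [hfs, zero_mul, zero_mul]; exact zero_mem _
      have hsN : x.1 ≤ N := by
        rw [hN]
        exact le_trans (le_natDegree_of_ne_zero hfs) (Finset.le_sup (f := fun i => (f i).natDegree) (Finset.mem_univ l))
      have hx1ne : x.1 ≠ j l := by
        intro hxx
        apply hxne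
        have h2 : x.2 = p l.val := by omega
        exact Prod.ext hxx h2
      have hex : ∃ i, t ≤ i ∨ p i < x.2 := ⟨t, Or.inl le_rfl⟩
      set lam := Nat.find hex with hlam
      have hlam_le : lam ≤ t := Nat.find_le (Or.inl le_rfl)
      have hlam_min : ∀ i, i < lam → i < t ∧ x.2 ≤ p i := by
        intro i hi
        have h3 := Nat.find_min hex hi
        push_neg at h3
        exact ⟨by omega, h3.2⟩
      have hmem2 : g.coeff x.2 ∈ Ideal.span (a '' Set.Iio lam) + M * C := by
        rcases lt_or_eq_of_le hlam_le with hlt' | heq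
        · have hspec := Nat.find_spec hex
          rw [← hlam] at hspec
          have hplam : p lam < x.2 := by
            rcases hspec with h' | h'
            · omega
            · exact h'
          exact H1 lam hlt' x.2 hplam
        · rw [heq]; exact H2 x.2
      rw [himg] at hmem2
      obtain ⟨w, hw, ε, hε, hwε⟩ := Submodule.mem_sup.1 hmem2
      obtain ⟨α, hα⟩ := (Submodule.mem_span_range_iff_exists_fun R).1 hw
      set j' := Function.update j l x.1 with hj'
      have hbsame : ∏ m ∈ Finset.univ.erase l, (f m).coeff (j' m) = b := by
        rw [hb]
        exact Finset.prod_congr rfl fun m hm => by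
          rw [hj', Function.update_of_ne (Finset.ne_of_mem_erase hm)]
      have hcfb : (f l).coeff x.1 * b = ∏ m, (f m).coeff (j' m) := by
        rw [← Finset.mul_prod_erase Finset.univ _ (Finset.mem_univ l), hbsame, hj',
          Function.update_self]
      have hterm_eq : (f l).coeff x.1 * g.coeff x.2 * b
          = (∑ i : Fin lam, α i * (a i.val * ((f l).coeff x.1 * b)))
            + ((f l).coeff x.1 * b) * ε := by
        rw [← hwε, ← hα, mul_add, add_mul]
        congr 1
        · rw [Finset.mul_sum, Finset.sum_mul]
          exact Finset.sum_congr rfl fun i _ => by rw [smul_eq_mul]; ring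
        · ring
      rw [hterm_eq]
      refine add_mem (sum_mem fun i _ => ?_) (hGP _ _ (hcfb ▸ hprodmem j') hε)
      have hit : i.val < t := (hlam_min i.val i.isLt).1
      have hx2pi : x.2 ≤ p i.val := (hlam_min i.val i.isLt).2
      have hik : i.val < k := lt_of_lt_of_le hit htk
      set i' : Fin k := ⟨i.val, hik⟩ with hi'
      have hrlt : rank N k i' j' < rank N k l j := by
        rcases lt_trichotomy i'.val l.val with hc | hc | hc
        · refine rank_lt_left (show i' < l from hc) fun m hm => ?_
          have hmne : m ≠ l := by
            intro hml
            rw [hml] at hm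
            have : l.val ≤ i'.val := hm
            omega
          rw [hj', Function.update_of_ne hmne]
        · have hx2le : x.2 ≤ p l.val := by
            rw [← hc]
            exact hx2pi
          have hx2lt : x.2 < p l.val := by
            rcases lt_or_eq_of_le hx2le with h' | h'
            · exact h'
            · exfalso; apply hx1ne; omega
          have hs1 : j l < x.1 := by omega
          have heql : l = i' := Fin.ext hc.symm
          exact rank_lt_update (le_of_eq heql) hs1 hsN
        · have hplt : p i'.val < p l.val := hdec l.val i'.val hc hit
          have hx2lt : x.2 < p l.val := lt_of_le_of_lt hx2pi hplt
          have hs1 : j l < x.1 := by omega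
          exact rank_lt_update (le_of_lt (show l < i' from hc)) hs1 hsN
      refine Ideal.mul_mem_left _ _ ?_
      rw [hcfb]
      exact IH (rank N k i' j') (lt_of_lt_of_le hrlt hrank) i' hit j' le_rfl
  -- conclude : every generator-product of P*C lies in G
  have hgen : ∀ (j : Fin k → ℕ) (u : ℕ), (∏ i, (f i).coeff (j i)) * g.coeff u ∈ G := by
    intro j u
    have hmem2 := H2 u
    rw [himg] at hmem2
    obtain ⟨w, hw, ε, hε, hwε⟩ := Submodule.mem_sup.1 hmem2
    obtain ⟨α, hα⟩ := (Submodule.mem_span_range_iff_exists_fun R).1 hw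
    have heq2 : (∏ i, (f i).coeff (j i)) * g.coeff u
        = (∑ i : Fin t, α i * (a i.val * ∏ m, (f m).coeff (j m)))
          + (∏ i, (f i).coeff (j i)) * ε := by
      rw [← hwε, ← hα, mul_add]
      congr 1
      rw [Finset.mul_sum]
      exact Finset.sum_congr rfl fun i _ => by rw [smul_eq_mul]; ring
    rw [heq2]
    refine add_mem (sum_mem fun i _ => ?_) (hGP _ _ (hprodmem j) hε)
    refine Ideal.mul_mem_left _ _ ?_
    have hik : i.val < k := lt_of_lt_of_le i.isLt htk
    exact key (rank N k ⟨i.val, hik⟩ j) ⟨i.val, hik⟩ i.isLt j le_rfl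
  -- finish: P * C ≤ G
  calc P * C
      = Ideal.span {z | ∃ j : Fin k → ℕ, z = ∏ i, (f i).coeff (j i)} * Ideal.span (Set.range g.coeff) := by
        rw [hP, prod_cont_eq_span f Finset.univ, hC, cont]
    _ ≤ G := by
        rw [Ideal.span_mul_span']
        rw [Ideal.span_le]
        rintro v ⟨z, ⟨j, rfl⟩, y, ⟨u, rfl⟩, rfl⟩
        exact hgen j u

theorem add_le_add_ideal {A A' B B' : Ideal R} (h1 : A ≤ A') (h2 : B ≤ B') :
    A + B ≤ A' + B' := by
  rw [Submodule.add_eq_sup, Submodule.add_eq_sup]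
  exact sup_le_sup h1 h2

theorem exists_gens [IsLocalRing R] (g : R[X]) :
    ∀ (k : ℕ) (x : Fin k → R) (F : Ideal R) (D : ℕ),
      (∀ i, x i ∈ cont g) →
      (∀ u, D ≤ u → g.coeff u ∈ F + IsLocalRing.maximalIdeal R * cont g) →
      (cont g ≤ F + Ideal.span (Set.range x)) →
      ∃ (t : ℕ) (p : ℕ → ℕ) (a : ℕ → R), t ≤ k ∧ (∀ l, l < t → p l < D) ∧
        (∀ l l', l < l' → l' < t → p l' < p l) ∧ (∀ l, l < t → a l = g.coeff (p l)) ∧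
        (∀ l, l < t → ∀ u, p l < u →
          g.coeff u ∈ F + Ideal.span (a '' Set.Iio l) + IsLocalRing.maximalIdeal R * cont g) ∧
        (∀ u, g.coeff u ∈ F + Ideal.span (a '' Set.Iio t) + IsLocalRing.maximalIdeal R * cont g) := by
  classical
  intro k
  induction k with
  | zero =>
    intro x F D hx hD hle
    refine ⟨0, fun _ => 0, fun _ => 0, le_rfl, fun l hl => absurd hl (Nat.not_lt_zero l),
      fun l l' h h' => absurd h' (Nat.not_lt_zero l'), fun l hl => absurd hl (Nat.not_lt_zero l),
      fun l hl => absurd hl (Nat.not_lt_zero l), ?_⟩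
    intro u
    have h1 : g.coeff u ∈ F := by
      have h2 := hle (coeff_mem_cont g u)
      rwa [Set.range_eq_empty, Ideal.span_empty, ← Submodule.zero_eq_bot, add_zero] at h2
    have h3 : ((fun _ : ℕ => (0 : R)) '' Set.Iio 0) = (∅ : Set R) := by
      ext v; simp
    rw [h3, Ideal.span_empty, ← Submodule.zero_eq_bot, add_zero]
    exact Submodule.mem_sup_left h1
  | succ k' IH =>
    intro x F D hx hD hle
    by_cases hall : ∀ u, g.coeff u ∈ F + IsLocalRing.maximalIdeal R * cont g
    · refine ⟨0, fun _ => 0, fun _ => 0, by omega, fun l hl => absurd hl (Nat.not_lt_zero l),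
        fun l l' h h' => absurd h' (Nat.not_lt_zero l'), fun l hl => absurd hl (Nat.not_lt_zero l),
        fun l hl => absurd hl (Nat.not_lt_zero l), ?_⟩
      intro u
      have h3 : ((fun _ : ℕ => (0 : R)) '' Set.Iio 0) = (∅ : Set R) := by
      
        ext v; simp
      rw [h3, Ideal.span_empty, ← Submodule.zero_eq_bot, add_zero]
      exact hall u
    · push_neg at hall
      obtain ⟨u₀, hu₀⟩ := hall
      set M := IsLocalRing.maximalIdeal R with hM
      set C := cont g with hC
      have hbdd : ∀ u, g.natDegree < u → g.coeff u ∈ F + M * C := by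
        intro u hu
        rw [coeff_eq_zero_of_natDegree_lt hu]
        exact zero_mem _
      have hu₀le : u₀ ≤ g.natDegree := by
        by_contra h
        exact hu₀ (hbdd u₀ (by omega))
      set d := Nat.findGreatest (fun u => g.coeff u ∉ F + M * C) g.natDegree with hd
      have hPdd : g.coeff d ∉ F + M * C := by
        rw [hd]
        exact Nat.findGreatest_spec (P := fun u => g.coeff u ∉ F + M * C) hu₀le hu₀
      have hdmax : ∀ u, d < u → g.coeff u ∈ F + M * C := by
        intro u hu
        by_cases h2 : u ≤ g.natDegree
        · by_contra h3
          rw [hd] at hu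
          exact Nat.findGreatest_is_greatest (P := fun u => g.coeff u ∉ F + M * C) hu h2 h3
        · exact hbdd u (by omega)
      have hdD : d < D := by
        by_contra h
        exact hPdd (hD d (by omega))
      set a₀ := g.coeff d with ha₀
      have ha₀mem : a₀ ∈ F + Ideal.span (Set.range x) := hle (coeff_mem_cont g d)
      obtain ⟨φ, hφ, w, hw, hφw⟩ := Submodule.mem_sup.1 ha₀mem
      obtain ⟨c, hc⟩ := (Submodule.mem_span_range_iff_exists_fun R).1 hw
      have hexu : ∃ i₀, c i₀ ∉ M := by
        by_contra h4
        push_neg at h4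
        apply hPdd
        have hwM : w ∈ M * C := by
          rw [← hc]
          exact sum_mem fun i _ => by
            rw [smul_eq_mul]; exact Ideal.mul_mem_mul (h4 i) (hx i)
        exact Submodule.mem_sup.2 ⟨φ, hφ, w, hwM, hφw⟩
      obtain ⟨i₀, hi₀⟩ := hexu
      have hunit : IsUnit (c i₀) := by
        by_contra h5
        exact hi₀ ((IsLocalRing.mem_maximalIdeal (c i₀)).2 h5)
      set x' : Fin k' → R := fun i => x (i₀.succAbove i) with hx'
      set F' := F + Ideal.span {a₀} with hF'
      have hyp1 : ∀ i, x' i ∈ cont g := fun i => hx _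
      have hyp2 : ∀ u, d ≤ u → g.coeff u ∈ F' + M * C := by
        intro u hu
        rcases eq_or_lt_of_le hu with rfl | hu'
        · exact Submodule.mem_sup_left
            (Submodule.mem_sup_right (Ideal.subset_span rfl))
        · exact add_le_add_ideal (self_le_add_right F _) le_rfl (hdmax u hu')
      have hc' : c i₀ • x i₀ + ∑ i ∈ Finset.univ.erase i₀, c i • x i = w := by
        rw [← hc]
        exact Finset.add_sum_erase _ (fun i => c i • x i) (Finset.mem_univ i₀)
      have hrest : ∑ i ∈ Finset.univ.erase i₀, c i • x i ∈ Ideal.span (Set.range x') := by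
        refine sum_mem fun i hi => ?_
        obtain ⟨i', hi'⟩ := Fin.exists_succAbove_eq (Finset.ne_of_mem_erase hi)
        refine Submodule.smul_mem _ _ (Ideal.subset_span ⟨i', ?_⟩)
        rw [hx']
        simp only []
        rw [hi']
      have hcx : c i₀ * x i₀ ∈ F' + Ideal.span (Set.range x') := by
        have h8 : φ + (c i₀ • x i₀ + ∑ i ∈ Finset.univ.erase i₀, c i • x i) = a₀ := by
          rw [hc']; exact hφw
        rw [smul_eq_mul] at h8
        have h9 : c i₀ * x i₀ = a₀ - φ - ∑ i ∈ Finset.univ.erase i₀, c i • x i := by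
          linear_combination h8
        rw [h9]
        refine sub_mem (sub_mem ?_ ?_) ?_
        · exact Submodule.mem_sup_left (Submodule.mem_sup_right (Ideal.subset_span rfl))
        · exact Submodule.mem_sup_left (Submodule.mem_sup_left hφ)
        · exact Submodule.mem_sup_right hrest
      have hxi₀ : x i₀ ∈ F' + Ideal.span (Set.range x') := by
        have h10 : (↑hunit.unit⁻¹ : R) * c i₀ = 1 := by
          have h11 := hunit.unit.inv_mul
          rwa [IsUnit.unit_spec] at h11
        have h12 : x i₀ = (↑hunit.unit⁻¹ : R) * (c i₀ * x i₀) := by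
          rw [← mul_assoc, h10, one_mul]
        rw [h12]
        exact Ideal.mul_mem_left _ _ hcx
      have hspan : Ideal.span (Set.range x) ≤ F' + Ideal.span (Set.range x') := by
        rw [Ideal.span_le]
        rintro _ ⟨i, rfl⟩
        by_cases hii : i = i₀
        · rw [hii]; exact hxi₀
        · obtain ⟨i', hi'⟩ := Fin.exists_succAbove_eq hii
          refine Submodule.mem_sup_right (Ideal.subset_span ⟨i', ?_⟩)
          rw [hx']
          simp only []
          rw [hi']
      have hyp3 : cont g ≤ F' + Ideal.span (Set.range x') := by
        intro z hz
        obtain ⟨φ₁, hφ₁, w₁, hw₁, hzw⟩ := Submodule.mem_sup.1 (hle hz)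
        rw [← hzw]
        exact add_mem (Submodule.mem_sup_left (Submodule.mem_sup_left hφ₁)) (hspan hw₁)
      obtain ⟨t', p', a', ht'k, hp'D, hdec', ha', H1', H2'⟩ := IH x' F' d hyp1 hyp2 hyp3
      set pnew : ℕ → ℕ := fun l => if l = 0 then d else p' (l - 1) with hpnew
      set anew : ℕ → R := fun l => if l = 0 then a₀ else a' (l - 1) with hanew
      have himg_succ : ∀ m : ℕ, (anew '' Set.Iio (m + 1) : Set R)
          = insert a₀ (a' '' Set.Iio m) := by
        intro m
        ext z
        simp only [Set.mem_image, Set.mem_Iio, Set.mem_insert_iff]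
        constructor
        · rintro ⟨v, hv, rfl⟩
          rcases Nat.eq_zero_or_pos v with rfl | hv0
          · left; simp [hanew]
          · right
            refine ⟨v - 1, by omega, ?_⟩
            simp only [hanew]
            rw [if_neg (by omega)]
        · rintro (rfl | ⟨v, hv, rfl⟩)
          · exact ⟨0, by omega, by simp [hanew]⟩
          · refine ⟨v + 1, by omega, ?_⟩
            simp only [hanew]
            rw [if_neg (by omega), Nat.add_sub_cancel]
      have hspan_succ : ∀ m : ℕ, (Ideal.span (anew '' Set.Iio (m + 1)) : Ideal R)
          = Ideal.span {a₀} + Ideal.span (a' '' Set.Iio m) := by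
        intro m
        rw [himg_succ m, Ideal.span_insert, Submodule.add_eq_sup]
      refine ⟨t' + 1, pnew, anew, by omega, ?_, ?_, ?_, ?_, ?_⟩
      · intro l hl
        by_cases hl0 : l = 0
        · simp only [hpnew, hl0, if_pos rfl]
          exact hdD
        · simp only [hpnew, if_neg hl0]
          exact lt_trans (hp'D (l - 1) (by omega)) hdD
      · intro l l' hll' hl't
        by_cases hl0 : l = 0
        · simp only [hpnew, hl0, if_pos rfl, if_neg (by omega : l' ≠ 0)]
          exact hp'D (l' - 1) (by omega)
        · simp only [hpnew, if_neg hl0, if_neg (by omega : l' ≠ 0)]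
          exact hdec' (l - 1) (l' - 1) (by omega) (by omega)
      · intro l hl
        by_cases hl0 : l = 0
        · simp [hanew, hpnew, hl0, ha₀]
        · simp only [hanew, hpnew, if_neg hl0]
          exact ha' (l - 1) (by omega)
      · intro l hl u hu
        by_cases hl0 : l = 0
        · subst hl0
          simp only [hpnew, if_pos rfl] at hu
          have h11 := hdmax u hu
          have h12 : (anew '' Set.Iio 0 : Set R) = ∅ := by ext v; simp
          rw [h12, Ideal.span_empty, ← Submodule.zero_eq_bot, add_zero]
          exact h11
        · obtain ⟨m, rfl⟩ : ∃ m, l = m + 1 := ⟨l - 1, by omega⟩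
          simp only [hpnew, if_neg (Nat.succ_ne_zero m), Nat.add_sub_cancel] at hu
          have h13 := H1' m (by omega) u hu
          rw [hspan_succ m, ← add_assoc]
          exact h13
      · intro u
        have h14 := H2' u
        rw [hspan_succ t', ← add_assoc]
        exact h14

theorem prod_cont_fg {k : ℕ} (f : Fin k → R[X]) : (∏ i, cont (f i)).FG := by
  classical
  refine Finset.prod_induction _ Submodule.FG (fun a b ha hb => Submodule.FG.mul ha hb) ?_
    (fun i _ => cont_fg (f i))
  exact ⟨{1}, by simp [Ideal.one_eq_top]⟩

theorem local_le [IsLocalRing R] (g : R[X]) {k : ℕ} (x : Fin k → R)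
    (hx : Ideal.span (Set.range x) = cont g) (f : Fin k → R[X]) :
    (∏ i, cont (f i)) * cont g ≤
      ∑ i, cont (f i * g) * ∏ j ∈ Finset.univ.erase i, cont (f j) := by
  classical
  have hxC : ∀ i, x i ∈ cont g := fun i => hx ▸ Ideal.subset_span ⟨i, rfl⟩
  have hD : ∀ u, g.natDegree + 1 ≤ u →
      g.coeff u ∈ (⊥ : Ideal R) + IsLocalRing.maximalIdeal R * cont g := by
    intro u hu
    rw [coeff_eq_zero_of_natDegree_lt (by omega)]
    exact zero_mem _
  have hle : cont g ≤ (⊥ : Ideal R) + Ideal.span (Set.range x) := by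
    rw [← Submodule.zero_eq_bot, zero_add, hx]
  obtain ⟨t, p, a, htk, hpD, hdec, ha, H1, H2⟩ :=
    exists_gens g k x ⊥ (g.natDegree + 1) hxC hD hle
  have H1' : ∀ l, l < t → ∀ u, p l < u →
      g.coeff u ∈ Ideal.span (a '' Set.Iio l) + IsLocalRing.maximalIdeal R * cont g := by
    intro l hl u hu
    have h := H1 l hl u hu
    rwa [← Submodule.zero_eq_bot, zero_add] at h
  have H2' : ∀ u,
      g.coeff u ∈ Ideal.span (a '' Set.Iio t) + IsLocalRing.maximalIdeal R * cont g := by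
    intro u
    have h := H2 u
    rwa [← Submodule.zero_eq_bot, zero_add] at h
  have hmain := main_local g htk p a hdec ha H1' H2' f
  have hfg : ((∏ i, cont (f i)) * cont g).FG := Submodule.FG.mul (prod_cont_fg f) (cont_fg g)
  refine Submodule.le_of_le_smul_of_le_jacobson_bot hfg
    (IsLocalRing.maximalIdeal_le_jacobson ⊥) ?_
  rw [Ideal.smul_eq_mul, ← Submodule.add_eq_sup]
  exact hmain

theorem easy_le (g : R[X]) {k : ℕ} (f : Fin k → R[X]) :
    (∑ i, cont (f i * g) * ∏ j ∈ Finset.univ.erase i, cont (f j))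
      ≤ (∏ i, cont (f i)) * cont g := by
  classical
  refine Finset.sum_induction _ (· ≤ (∏ i, cont (f i)) * cont g)
    (fun a b ha hb => ?_) bot_le (fun l _ => ?_)
  · rw [Submodule.add_eq_sup]; exact sup_le ha hb
  · calc cont (f l * g) * ∏ j ∈ Finset.univ.erase l, cont (f j)
        ≤ (cont (f l) * cont g) * ∏ j ∈ Finset.univ.erase l, cont (f j) :=
          Ideal.mul_mono (cont_mul_le (f l) g) le_rfl
      _ = (cont (f l) * ∏ j ∈ Finset.univ.erase l, cont (f j)) * cont g := by ring
      _ = (∏ i, cont (f i)) * cont g := by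
          rw [Finset.mul_prod_erase Finset.univ (fun i => cont (f i)) (Finset.mem_univ l)]

theorem global_eq (g : R[X]) {k : ℕ} (x : Fin k → R)
    (hx : Ideal.span (Set.range x) = cont g) (f : Fin k → R[X]) :
    (∑ i, cont (f i * g) * ∏ j ∈ Finset.univ.erase i, cont (f j))
      = (∏ i, cont (f i)) * cont g := by
  classical
  refine le_antisymm (easy_le g f) ?_
  refine Ideal.le_of_localization_maximal ?_
  intro P hP
  haveI := hP.isPrime
  set φ := algebraMap R (Localization.AtPrime P) with hφ
  have hmapT : Ideal.map φ ((∏ i, cont (f i)) * cont g)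
      = (∏ i, cont ((f i).map φ)) * cont (g.map φ) := by
    rw [Ideal.map_mul, map_ideal_prod φ Finset.univ (fun i => cont (f i)), ← cont_map φ g]
    congr 1
    exact Finset.prod_congr rfl fun i _ => (cont_map φ (f i)).symm
  have hmapS : Ideal.map φ (∑ i, cont (f i * g) * ∏ j ∈ Finset.univ.erase i, cont (f j))
      = ∑ i, cont ((f i).map φ * g.map φ) * ∏ j ∈ Finset.univ.erase i, cont ((f j).map φ) := by
    rw [map_ideal_sum]
    refine Finset.sum_congr rfl fun i _ => ?_
    rw [Ideal.map_mul, map_ideal_prod]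
    congr 1
    · rw [← Polynomial.map_mul, cont_map]
    · exact Finset.prod_congr rfl fun jj _ => (cont_map φ (f jj)).symm
  rw [hmapT, hmapS]
  have hrange : Set.range (fun i => φ (x i)) = φ '' Set.range x := by
    rw [← Set.range_comp]; rfl
  have hx' : Ideal.span (Set.range (fun i => φ (x i))) = cont (g.map φ) := by
    rw [cont_map, ← hx, Ideal.map_span, hrange]
  exact local_le (g.map φ) (fun i => φ (x i)) hx' (fun i => (f i).map φ)

end PolDM

/-- Theorem 2.5: the polarized Dedekind--Mertens number of `g` is bounded above by the
minimal number of generators of the content ideal `c(g)`; in particular, the polarized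
Dedekind--Mertens formula holds for `k = μ_R(c(g))` polynomials. -/
theorem polDmNumber_le_mug_content {R : Type*} [CommRing R] (g : R[X]) (hg : g ≠ 0) :
    polDmNumber R g ≤ mug (cont g) ∧
    (∀ f : Fin (mug (cont g)) → R[X],
      (∑ i, cont (f i * g) * ∏ j ∈ Finset.univ.erase i, cont (f j)) =
        (∏ i, cont (f i)) * cont g) := by
  classical
  obtain ⟨s, hs⟩ := PolDM.cont_fg g
  have hnonempty : {n | ∃ x : Fin n → R, Ideal.span (Set.range x) = cont g}.Nonempty := by
    refine ⟨s.card, fun i => (s.equivFin.symm i).1, ?_⟩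
    rw [← hs]
    congr 1
    ext z
    constructor
    · rintro ⟨i, rfl⟩
      exact (s.equivFin.symm i).2
    · intro hz
      exact ⟨s.equivFin ⟨z, hz⟩, by simp⟩
  have hmem : mug (cont g) ∈ {n | ∃ x : Fin n → R, Ideal.span (Set.range x) = cont g} :=
    Nat.sInf_mem hnonempty
  obtain ⟨x, hx⟩ := hmem
  have hident : ∀ f : Fin (mug (cont g)) → R[X],
      (∑ i, cont (f i * g) * ∏ j ∈ Finset.univ.erase i, cont (f j)) =
        (∏ i, cont (f i)) * cont g := fun f => PolDM.global_eq g x hx f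
  have hpos : 0 < mug (cont g) := by
    rcases Nat.eq_zero_or_pos (mug (cont g)) with h0 | h
    · exfalso
      haveI : IsEmpty (Fin (mug (cont g))) := by rw [h0]; infer_instance
      have hbot : cont g = ⊥ := by
        rw [← hx, Set.range_eq_empty, Ideal.span_empty]
      exact hg (PolDM.cont_eq_bot_iff.1 hbot)
    · exact h
  exact ⟨Nat.sInf_le ⟨hpos, hident⟩, hident⟩
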